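/- arXiv:1602.03052 — 2 statements merged into one kernel-verified Lean document; each statement's English description precedes it below -/
import Mathlib

section
/- For nonnegative integers n, k, m with k ≤ m ≤ n, the difference of Gaussian binomial coefficients [n choose k]_q - [n choose k-1]_q, where by convention [n choose -1]_q = 0, has nonnegative coefficients as a polynomial in q whenever 2k ≤ n (i.e. when k ≤ n-k). -/
open Finset

noncomputable section

/-- The field of rational functions `ℚ(q)`. -/
abbrev K : Type := RatFunc ℚ

/-- The variable `q`. -/
def q : K := RatFunc.X

/-- The Gaussian binomial coefficient `[n choose k]_q` as a rational function. -/
def gbinom (n k : ℕ) : K :=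
  (∏ i ∈ Finset.range k, (1 - q ^ (n - i))) / (∏ i ∈ Finset.range k, (1 - q ^ (i + 1)))

lemma q_eq : q = algebraMap (Polynomial ℚ) K Polynomial.X := (RatFunc.algebraMap_X).symm

lemma q_pow_ne_one (m : ℕ) (hm : 1 ≤ m) : q ^ m ≠ 1 := by
  rw [q_eq, ← map_pow, ← map_one (algebraMap (Polynomial ℚ) K)]
  intro h
  have := RatFunc.algebraMap_injective ℚ h
  have : (Polynomial.X ^ m : Polynomial ℚ).natDegree = (1 : Polynomial ℚ).natDegree := by rw [this]
  simp [Polynomial.natDegree_X_pow] at this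
  omega

lemma one_sub_q_pow_ne (m : ℕ) (hm : 1 ≤ m) : (1 : K) - q ^ m ≠ 0 :=
  sub_ne_zero.mpr (Ne.symm (q_pow_ne_one m hm))

lemma den_ne_zero (k : ℕ) : (∏ i ∈ Finset.range k, ((1:K) - q ^ (i + 1))) ≠ 0 :=
  Finset.prod_ne_zero_iff.mpr fun i _ => one_sub_q_pow_ne _ (Nat.succ_le_succ (Nat.zero_le i))

lemma gbinom_zero (n : ℕ) : gbinom n 0 = 1 := by simp [gbinom]

lemma gbinom_eq_zero {n k : ℕ} (h : n < k) : gbinom n k = 0 := by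
  unfold gbinom
  rw [Finset.prod_eq_zero (Finset.mem_range.mpr h) (by simp), zero_div]

lemma num_succ_top (n k : ℕ) :
    (∏ i ∈ range (k+1), ((1:K) - q ^ (n + 1 - i)))
      = (1 - q ^ (n+1)) * ∏ i ∈ range k, (1 - q ^ (n - i)) := by
  rw [Finset.prod_range_succ']
  simp [Nat.succ_sub_succ, mul_comm]

lemma num_succ (n k : ℕ) :
    (∏ i ∈ range (k+1), ((1:K) - q ^ (n - i)))
      = (∏ i ∈ range k, (1 - q ^ (n - i))) * (1 - q ^ (n - k)) :=
  Finset.prod_range_succ _ _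

lemma den_succ (k : ℕ) :
    (∏ i ∈ range (k+1), ((1:K) - q ^ (i+1)))
      = (∏ i ∈ range k, (1 - q ^ (i+1))) * (1 - q ^ (k+1)) :=
  Finset.prod_range_succ _ _

lemma pascal1 (n k : ℕ) :
    gbinom (n+1) (k+1) = gbinom n (k+1) + q ^ (n - k) * gbinom n k := by
  rcases le_or_gt k n with h | h
  · unfold gbinom
    rw [num_succ_top, num_succ, den_succ]
    have hA := den_ne_zero k
    have hk := one_sub_q_pow_ne (k+1) (by omega)
    have hpow : q ^ (n - k) * q ^ (k + 1) = q ^ (n + 1) := by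
      rw [← pow_add]; congr 1; omega
    rw [← hpow]
    field_simp
    ring
  · rw [gbinom_eq_zero (by omega), gbinom_eq_zero (by omega), gbinom_eq_zero (by omega)]
    ring

lemma pascal2 (n k : ℕ) :
    gbinom (n+1) (k+1) = gbinom n k + q ^ (k+1) * gbinom n (k+1) := by
  rcases le_or_gt k n with h | h
  · unfold gbinom
    rw [num_succ_top, num_succ, den_succ]
    have hA := den_ne_zero k
    have hk := one_sub_q_pow_ne (k+1) (by omega)
    have hpow : q ^ (k+1) * q ^ (n - k) = q ^ (n + 1) := by
      rw [← pow_add]; congr 1; omega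
    rw [← hpow]
    field_simp
    ring
  · rw [gbinom_eq_zero (by omega), gbinom_eq_zero (by omega), gbinom_eq_zero (by omega)]
    ring

lemma gbinom_symm_boundary (j : ℕ) :
    gbinom (2*j+1) (j+1) = gbinom (2*j+1) j := by
  unfold gbinom
  rw [Finset.prod_range_succ, Finset.prod_range_succ]
  have h1 : 2*j+1-j = j+1 := by omega
  rw [h1]
  rw [mul_div_mul_right _ _ (one_sub_q_pow_ne (j+1) (by omega))]

lemma gbinom_one (n : ℕ) : gbinom n 1 = ∑ i ∈ range n, q ^ i := by
  unfold gbinom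
  simp only [Finset.prod_range_one, pow_one, Nat.sub_zero, zero_add]
  rw [div_eq_iff (by simpa using one_sub_q_pow_ne 1 le_rfl)]
  have := geom_sum_mul (q) n
  linear_combination this

def IsNN (f : K) : Prop :=
  ∃ P : Polynomial ℕ, algebraMap (Polynomial ℚ) K (P.map (Nat.castRingHom ℚ)) = f

lemma isNN_zero : IsNN 0 := ⟨0, by simp⟩
lemma isNN_one : IsNN 1 := ⟨1, by simp⟩

lemma isNN_add {f g : K} (hf : IsNN f) (hg : IsNN g) : IsNN (f + g) := by
  obtain ⟨P, hP⟩ := hf; obtain ⟨Q, hQ⟩ := hg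
  exact ⟨P + Q, by rw [Polynomial.map_add, map_add, hP, hQ]⟩

lemma isNN_qpow_mul {f : K} (t : ℕ) (hf : IsNN f) : IsNN (q ^ t * f) := by
  obtain ⟨P, hP⟩ := hf
  refine ⟨Polynomial.X ^ t * P, ?_⟩
  rw [Polynomial.map_mul, Polynomial.map_pow, Polynomial.map_X, map_mul, map_pow, hP, q_eq]

lemma isNN_geom_diff {n a : ℕ} (h : a < n) :
    IsNN ((∑ i ∈ range n, q ^ i) - q ^ a) := by
  refine ⟨∑ i ∈ (range n).erase a, Polynomial.X ^ i, ?_⟩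
  rw [Polynomial.map_sum]
  simp only [Polynomial.map_pow, Polynomial.map_X, map_sum, map_pow]
  rw [← q_eq]
  have h2 := Finset.sum_erase_add (range n) (fun i => q ^ i) (Finset.mem_range.mpr h)
  linear_combination h2

lemma main_lemma : ∀ n j a : ℕ, 2*(j+1) + a ≤ n + 1 →
    IsNN (gbinom n (j+1) - q ^ a * gbinom n j) := by
  intro n
  induction n using Nat.strong_induction_on with
  | _ n IH =>
    intro j a h
    rcases j with _ | i
    · -- k = 1 base case
      have ha : a < n := by omega
      rw [gbinom_zero, mul_one, gbinom_one]
      exact isNN_geom_diff ha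
    · obtain ⟨m, rfl⟩ : ∃ m, n = m + 1 := ⟨n - 1, by omega⟩
      by_cases hc : 2*(i+1+1) + a ≤ m + 1
      · -- interior case: use pascal1
        have e1 := pascal1 m (i+1)
        have e2 := pascal1 m i
        have hm : i + 1 ≤ m := by omega
        have hp : q ^ (m - (i+1)) * q ^ (a+1) = q ^ a * q ^ (m - i) := by
          rw [← pow_add, ← pow_add]; congr 1; omega
        have key : gbinom (m+1) (i+1+1) - q ^ a * gbinom (m+1) (i+1)
            = (gbinom m (i+1+1) - q ^ a * gbinom m (i+1))
              + q ^ (m - (i+1)) * (gbinom m (i+1) - q ^ (a+1) * gbinom m i) := by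
          rw [e1, e2]
          linear_combination (gbinom m i) * hp
        rw [key]
        exact isNN_add (IH m (by omega) (i+1) a (by omega))
          (isNN_qpow_mul _ (IH m (by omega) i (a+1) (by omega)))
      · -- boundary case: 2*(i+2) + a = m + 2
        have hb : 2*(i+1+1) + a = m + 2 := by omega
        rcases a with _ | b
        · -- a = 0 : symmetric, difference is zero
          have hm : m + 1 = 2*(i+1) + 1 := by omega
          rw [hm, gbinom_symm_boundary (i+1), pow_zero, one_mul, sub_self]
          exact isNN_zero
        · -- a = b + 1 : use pascal2
          have e1 := pascal2 m (i+1)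
          have e2 := pascal2 m i
          have hp : q ^ (i+1+1) * q ^ b = q ^ (b+1) * q ^ (i+1) := by
            rw [← pow_add, ← pow_add]; congr 1; omega
          have key : gbinom (m+1) (i+1+1) - q ^ (b+1) * gbinom (m+1) (i+1)
              = (gbinom m (i+1) - q ^ (b+1) * gbinom m i)
                + q ^ (i+1+1) * (gbinom m (i+1+1) - q ^ b * gbinom m (i+1)) := by
            rw [e1, e2]
            linear_combination (gbinom m (i+1)) * hp
          rw [key]
          exact isNN_add (IH m (by omega) i (b+1) (by omega))
            (isNN_qpow_mul _ (IH m (by omega) (i+1) b (by omega)))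

/-- For `k ≤ m ≤ n` with `2k ≤ n`, the difference `[n choose k]_q - [n choose k-1]_q`
(with the convention `[n choose -1]_q = 0`) is a polynomial in `q` with nonnegative
integer coefficients. -/
theorem gaussian_binomial_difference_nonneg (n k m : ℕ)
    (hkm : k ≤ m) (hmn : m ≤ n) (h2k : 2 * k ≤ n) :
    ∃ P : Polynomial ℕ,
      algebraMap (Polynomial ℚ) K (P.map (Nat.castRingHom ℚ)) =
        gbinom n k - (if k = 0 then 0 else gbinom n (k - 1)) := by
  rcases k with _ | j
  · simp only [if_pos rfl, sub_zero, gbinom_zero]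
    exact ⟨1, by simp⟩
  · simp only [Nat.succ_ne_zero, if_neg, Nat.add_sub_cancel]
    have := main_lemma n j 0 (by omega)
    rw [pow_zero, one_mul] at this
    exact this

end
end

section
/- Quadratic transformation (Proposition A.6): as formal power series in x, ∑_{n=0}^∞ (D²;q)_n (R/q;q²)_n / ( (q;q)_n (R/q;q)_n ) · xⁿ = ∑_{k=0}^∞ (D²;q)_{2k} / ( (q²;q²)_k (R;q²)_k ) · (D² x q^{2k}; q)_∞ / (x;q)_∞ · q^{k(2k-2)} R^k x^{2k}. -/
open Finset

noncomputable section

/-- Coefficients: the field of rational functions over `ℚ` in the formal parameters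
`D` (variable 0) and `R/q` (variable 1). -/
abbrev Kc : Type := FractionRing (MvPolynomial (Fin 2) ℚ)

/-- The formal power series ring in the two variables `q` and `x` over `Kc`. -/
abbrev M : Type := MvPowerSeries (Fin 2) Kc

/-- The series variable `q`. -/
def qv : M := MvPowerSeries.X 0

/-- The series variable `x`. -/
def xv : M := MvPowerSeries.X 1

/-- The parameter `D`, regarded as a constant power series. -/
def Dv : M := MvPowerSeries.C (σ := Fin 2) (R := Kc)
  (algebraMap (MvPolynomial (Fin 2) ℚ) Kc (MvPolynomial.X 0))

/-- The parameter `R/q`, regarded as a constant power series. -/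
def Rq : M := MvPowerSeries.C (σ := Fin 2) (R := Kc)
  (algebraMap (MvPolynomial (Fin 2) ℚ) Kc (MvPolynomial.X 1))

/-- The parameter `R = (R/q)·q`. -/
def Rv : M := Rq * qv

/-- The q-Pochhammer symbol `(A;Q)_r = ∏_{j=0}^{r-1}(1 - A Q^j)`. -/
def pch (A Q : M) (r : ℕ) : M := ∏ j ∈ Finset.range r, (1 - A * Q ^ j)

open MvPowerSeries

def CC (f : M) : Kc := MvPowerSeries.constantCoeff (σ := Fin 2) (R := Kc) f

-- the fraction-field images of the two polynomial generators
def Dk : Kc := algebraMap (MvPolynomial (Fin 2) ℚ) Kc (MvPolynomial.X 0)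
def Rk : Kc := algebraMap (MvPolynomial (Fin 2) ℚ) Kc (MvPolynomial.X 1)

lemma one_sub_Rk_ne : (1 : Kc) - Rk ≠ 0 := by
  intro h
  have h1 : algebraMap (MvPolynomial (Fin 2) ℚ) Kc (1 - MvPolynomial.X 1) = 0 := by
    rw [map_sub, map_one]; exact h
  have h2 : (1 - MvPolynomial.X 1 : MvPolynomial (Fin 2) ℚ) = 0 :=
    (map_eq_zero_iff _ (IsFractionRing.injective _ _)).mp h1
  have := congrArg MvPolynomial.constantCoeff h2
  simp at this

lemma CC_qv : CC qv = 0 := MvPowerSeries.constantCoeff_X 0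
lemma CC_xv : CC xv = 0 := MvPowerSeries.constantCoeff_X 1
lemma CC_Rq : CC Rq = Rk := constantCoeff_C _
lemma CC_Dv : CC Dv = Dk := constantCoeff_C _

lemma CC_qv_pow {n : ℕ} (h : 0 < n) : CC (qv ^ n) = 0 := by
  rw [show CC (qv ^ n) = (CC qv) ^ n from map_pow _ _ _, CC_qv]
  exact zero_pow (by omega)

lemma ne_zero_of_CC {f : M} (h : CC f ≠ 0) : f ≠ 0 := by
  intro h0; apply h; rw [h0]; exact map_zero _

lemma CC_pch_qq (n : ℕ) : CC (pch qv qv n) = 1 := by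
  unfold pch CC
  rw [map_prod]
  apply Finset.prod_eq_one
  intro j _
  simp [qv]

lemma CC_pch_q2 (n : ℕ) : CC (pch (qv^2) (qv^2) n) = 1 := by
  unfold pch CC
  rw [map_prod]
  apply Finset.prod_eq_one
  intro j _
  simp [qv]

lemma CC_pch_Rv (n : ℕ) : CC (pch Rv (qv^2) n) = 1 := by
  unfold pch CC
  rw [map_prod]
  apply Finset.prod_eq_one
  intro j _
  simp [Rv, qv]

lemma CC_one_sub_Rq_pow (n : ℕ) : CC (1 - Rq * qv ^ n) ≠ 0 := by
  rcases Nat.eq_zero_or_pos n with h | h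
  · subst h
    rw [show CC (1 - Rq * qv ^ 0) = CC 1 - CC Rq * CC (qv ^ 0) by
        unfold CC; rw [map_sub, map_mul]]
    rw [CC_Rq, pow_zero]
    unfold CC
    simp only [map_one, mul_one]
    exact one_sub_Rk_ne
  · rw [show CC (1 - Rq * qv ^ n) = CC 1 - CC Rq * CC (qv ^ n) by
        unfold CC; rw [map_sub, map_mul]]
    rw [CC_qv_pow h]
    unfold CC
    simp

lemma CC_pch_Rq_qv (n : ℕ) : CC (pch Rq qv n) ≠ 0 := by
  unfold pch CC
  rw [map_prod]
  apply Finset.prod_ne_zero_iff.mpr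
  intro j _
  exact CC_one_sub_Rq_pow j

-- cancel lemmas
lemma mulinv {f : M} (h : CC f ≠ 0) : f * f⁻¹ = 1 := MvPowerSeries.mul_inv_cancel _ h
lemma invmul {f : M} (h : CC f ≠ 0) : f⁻¹ * f = 1 := MvPowerSeries.inv_mul_cancel _ h

def P (n : ℕ) : M := pch qv qv n
def u (n : ℕ) : M := (P n)⁻¹
lemma CC_P (n : ℕ) : CC (P n) = 1 := CC_pch_qq n
lemma P_ne (n : ℕ) : P n ≠ 0 := ne_zero_of_CC (by rw [CC_P]; exact one_ne_zero)
lemma P_mul_u (n : ℕ) : P n * u n = 1 := mulinv (by rw [CC_P]; exact one_ne_zero)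
lemma u_mul_P (n : ℕ) : u n * P n = 1 := invmul (by rw [CC_P]; exact one_ne_zero)

lemma pch_succ (A Q : M) (n : ℕ) : pch A Q (n+1) = pch A Q n * (1 - A * Q ^ n) :=
  Finset.prod_range_succ _ _

lemma pch_zero (A Q : M) : pch A Q 0 = 1 := rfl

lemma pch_add (A : M) (s t : ℕ) :
    pch A qv (s + t) = pch A qv s * pch (A * qv ^ s) qv t := by
  unfold pch
  rw [Finset.prod_range_add]
  congr 1
  apply Finset.prod_congr rfl
  intro j _
  rw [pow_add]
  ring

lemma P_succ (n : ℕ) : P (n+1) = P n * (1 - qv ^ (n+1)) := by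
  rw [show P (n+1) = pch qv qv (n+1) from rfl, pch_succ]
  rw [← pow_succ']
  rfl

lemma u_succ (n : ℕ) : u n = (1 - qv ^ (n+1)) * u (n+1) := by
  have hP : P (n+1) ≠ 0 := P_ne (n+1)
  apply mul_right_cancel₀ hP
  rw [mul_assoc, u_mul_P, mul_one, P_succ, ← mul_assoc]
  rw [show u n * P n = 1 from u_mul_P n, one_mul]

def BB (N i : ℕ) : M := P N * u i * u (N - i)
def cf (N i : ℕ) : M := if i ≤ N then (-1 : M)^i * qv^(i.choose 2) * BB N i else 0
def chat (i : ℕ) : M := (-1 : M)^i * qv^(i.choose 2) * u i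

lemma u_zero : u 0 = 1 := by
  unfold u
  rw [show P 0 = 1 from rfl, inv_one]

lemma BB_zero (N : ℕ) : BB N 0 = 1 := by
  unfold BB
  rw [u_zero, Nat.sub_zero, mul_one, P_mul_u]

lemma BB_self (N : ℕ) : BB N N = 1 := by
  unfold BB
  rw [Nat.sub_self, u_zero, mul_one, P_mul_u]

lemma cf_zero (N : ℕ) : cf N 0 = 1 := by
  unfold cf
  rw [if_pos (Nat.zero_le N), BB_zero]
  simp

-- Pascal: B(N+1, i+1) = B(N, i+1) + q^(N-i) B(N, i), for i+1 ≤ N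
lemma BB_pascal {N i : ℕ} (h : i + 1 ≤ N) :
    BB (N+1) (i+1) = BB N (i+1) + qv^(N - i) * BB N i := by
  obtain ⟨t, ht⟩ : ∃ t, N = i + 1 + t := ⟨N - (i+1), by omega⟩
  subst ht
  have e1 : i + 1 + t + 1 - (i + 1) = t + 1 := by omega
  have e2 : i + 1 + t - (i + 1) = t := by omega
  have e3 : i + 1 + t - i = t + 1 := by omega
  unfold BB
  rw [e1, e2, e3]
  -- P (i+1+t+1) = P (i+1+t) * (1 - q^(i+t+2))
  rw [show i+1+t+1 = (i+1+t)+1 by ring, P_succ]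
  -- u t = (1 - q^(t+1)) * u (t+1)  and  u i = (1 - q^(i+1)) * u (i+1)
  rw [show u t = (1 - qv^(t+1)) * u (t+1) from u_succ t,
      show u i = (1 - qv^(i+1)) * u (i+1) from u_succ i]
  have key : (1 - qv ^ (i+1+t+1)) = (1 - qv^(t+1)) + qv^(t+1) * (1 - qv^(i+1)) := by
    rw [show i+1+t+1 = (t+1) + (i+1) by ring, pow_add]
    ring
  rw [key]
  ring

lemma cf_succ {N i : ℕ} : cf (N+1) (i+1) = cf N (i+1) - qv^N * cf N i := by
  rcases le_or_gt (i+1) N with h | h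
  · unfold cf
    rw [if_pos (by omega), if_pos h, if_pos (by omega), BB_pascal h]
    have hch : (i+1).choose 2 = i.choose 2 + i := by
      rw [Nat.choose_succ_succ, Nat.choose_one_right, Nat.add_comm]
    have hqN : (qv : M)^(N - i) * qv^i = qv^N := by
      rw [← pow_add]; congr 1; omega
    rw [hch, pow_add]
    rw [show (qv:M)^N = qv^(N-i) * qv^i from hqN.symm]
    ring
  · rcases Nat.eq_or_lt_of_le h with h' | h'
    · -- i + 1 = N + 1, i.e. i = N
      have hi : i = N := by omega
      subst hi
      unfold cf
      rw [if_pos (le_refl _), if_neg (by omega), if_pos (le_refl _), BB_self, BB_self]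
      have hch : (i+1).choose 2 = i.choose 2 + i := by
        rw [Nat.choose_succ_succ, Nat.choose_one_right, Nat.add_comm]
      rw [hch, pow_add]
      ring
    · unfold cf
      rw [if_neg (by omega), if_neg (by omega), if_neg (by omega)]
      ring

/-- Finite Gauss binomial theorem. -/
lemma gauss (Y : M) : ∀ N : ℕ,
    ∏ j ∈ Finset.range N, (1 - Y * qv ^ j) = ∑ i ∈ Finset.range (N+1), cf N i * Y ^ i := by
  intro N
  induction N with
  | zero => simp [cf_zero]
  | succ N ih =>
    rw [Finset.prod_range_succ, ih]
    -- RHS of goal: ∑_{i ∈ range (N+2)} cf (N+1) i * Y^i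
    rw [Finset.sum_range_succ' _ (N+1)]
    -- = ∑_{i ∈ range (N+1)} cf (N+1) (i+1) * Y^(i+1) + cf (N+1) 0 * Y^0
    have step : ∀ i ∈ Finset.range (N+1),
        cf (N+1) (i+1) * Y^(i+1) = cf N (i+1) * Y^(i+1) - qv^N * (cf N i * Y^i) * Y := by
      intro i _
      rw [cf_succ, pow_succ]
      ring
    rw [Finset.sum_congr rfl step, Finset.sum_sub_distrib]
    have h1 : ∑ i ∈ Finset.range (N+1), cf N (i+1) * Y^(i+1) + cf (N+1) 0 * Y^0
        = ∑ i ∈ Finset.range (N+2), cf N i * Y^i := by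
      rw [Finset.sum_range_succ' (fun i => cf N i * Y^i) (N+1), cf_zero, cf_zero]
    have h2 : ∑ i ∈ Finset.range (N+2), cf N i * Y^i
        = ∑ i ∈ Finset.range (N+1), cf N i * Y^i := by
      rw [Finset.sum_range_succ]
      have : cf N (N+1) = 0 := by unfold cf; rw [if_neg (by omega)]
      rw [this]; ring
    have h3 : ∑ i ∈ Finset.range (N+1), qv^N * (cf N i * Y^i) * Y
        = qv^N * (∑ i ∈ Finset.range (N+1), cf N i * Y^i) * Y := by
      rw [Finset.mul_sum, Finset.sum_mul]
    calc (∑ i ∈ Finset.range (N+1), cf N i * Y^i) * (1 - Y * qv ^ N)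
        = (∑ i ∈ Finset.range (N+1), cf N i * Y^i)
          - qv^N * (∑ i ∈ Finset.range (N+1), cf N i * Y^i) * Y := by ring
      _ = _ := by
          rw [← h3, ← h2, ← h1]
          ring

/-- Gauss with truncated Pochhammer as value: `pch Y qv N = ∑ cf N i Y^i`. -/
lemma gauss_pch (Y : M) (N : ℕ) :
    pch Y qv N = ∑ i ∈ Finset.range (N+1), cf N i * Y ^ i := gauss Y N

/-- Per-degree convolution identity:
`∑_{i ≤ n} chat i Z^i u (n-i) = pch Z qv n * u n`. -/
lemma convn (Z : M) (n : ℕ) :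
    ∑ i ∈ Finset.range (n+1), chat i * Z ^ i * u (n - i) = pch Z qv n * u n := by
  apply mul_right_cancel₀ (P_ne n)
  rw [Finset.sum_mul]
  have step : ∀ i ∈ Finset.range (n+1),
      chat i * Z ^ i * u (n - i) * P n = cf n i * Z ^ i := by
    intro i hi
    rw [Finset.mem_range] at hi
    unfold chat cf BB
    rw [if_pos (by omega)]
    ring
  rw [Finset.sum_congr rfl step, ← gauss_pch, mul_assoc, u_mul_P, mul_one]

/-- The ideal of series all of whose low-degree coefficients vanish. -/
def J (a b : ℕ) : Ideal M where
  carrier := { f | ∀ e : Fin 2 →₀ ℕ, e 0 ≤ a → e 1 ≤ b → coeff (R := Kc) e f = 0 }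
  add_mem' := by intro f g hf hg e h0 h1; simp [map_add, hf e h0 h1, hg e h0 h1]
  zero_mem' := by intro e h0 h1; simp
  smul_mem' := by
    intro c f hf e h0 h1
    rw [smul_eq_mul, coeff_mul]
    apply Finset.sum_eq_zero
    rintro ⟨p, v⟩ hpv
    rw [Finset.HasAntidiagonal.mem_antidiagonal] at hpv
    have hv0 : v 0 ≤ a := le_trans (by simp [← hpv]) h0
    have hv1 : v 1 ≤ b := le_trans (by simp [← hpv]) h1
    rw [hf v hv0 hv1, mul_zero]

lemma mem_J_iff {a b : ℕ} {f : M} :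
    f ∈ J a b ↔ ∀ e : Fin 2 →₀ ℕ, e 0 ≤ a → e 1 ≤ b → coeff (R := Kc) e f = 0 := Iff.rfl

lemma X_pow_mem_J {a b c : ℕ} (i : Fin 2) (h : (if i = 0 then a else b) < c) :
    (MvPowerSeries.X i : M) ^ c ∈ J a b := by
  intro e h0 h1
  rw [MvPowerSeries.coeff_X_pow]
  split_ifs with he
  · exfalso
    subst he
    fin_cases i <;> simp_all <;> omega
  · rfl

lemma xv_pow_mem_J {a b c : ℕ} (h : b < c) : (xv : M) ^ c ∈ J a b :=
  X_pow_mem_J 1 (by simpa using h)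

lemma qv_pow_mem_J {a b c : ℕ} (h : a < c) : (qv : M) ^ c ∈ J a b :=
  X_pow_mem_J 0 (by simpa using h)

lemma inv_cong {a b : ℕ} {f g : M} (hf : CC f ≠ 0) (hg : CC g ≠ 0)
    (h : f - g ∈ J a b) : f⁻¹ - g⁻¹ ∈ J a b := by
  have key : f⁻¹ - g⁻¹ = f⁻¹ * (g - f) * g⁻¹ := by
    have h1 : f * f⁻¹ = 1 := mulinv hf
    have h2 : g⁻¹ * g = 1 := invmul hg
    calc f⁻¹ - g⁻¹ = f⁻¹ * (g * g⁻¹) - (f * f⁻¹) * g⁻¹ := by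
          rw [h1, mul_comm g g⁻¹, h2]; ring
      _ = f⁻¹ * (g - f) * g⁻¹ := by ring
  rw [key]
  exact Ideal.mul_mem_right _ _ (Ideal.mul_mem_left _ _ (by
    simpa [neg_sub] using neg_mem h))

lemma mul_cong {a b : ℕ} {f g f' g' : M} (h1 : f - f' ∈ J a b) (h2 : g - g' ∈ J a b) :
    f * g - f' * g' ∈ J a b := by
  have : f * g - f' * g' = (f - f') * g + f' * (g - g') := by ring
  rw [this]
  exact add_mem (Ideal.mul_mem_right _ _ h1) (Ideal.mul_mem_left _ _ h2)

lemma prod_one_cong {a b : ℕ} {s : Finset ℕ} {h : ℕ → M}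
    (hh : ∀ j ∈ s, h j - 1 ∈ J a b) : (∏ j ∈ s, h j) - 1 ∈ J a b := by
  classical
  induction s using Finset.induction_on with
  | empty => simp
  | @insert j s hj ih =>
    rw [Finset.prod_insert hj]
    have h1 := hh j (Finset.mem_insert_self j s)
    have h2 := ih (fun i hi => hh i (Finset.mem_insert_of_mem hi))
    have := mul_cong (a := a) (b := b) h1 h2
    simpa using this

lemma sum_cong {a b : ℕ} {s : Finset ℕ} {f g : ℕ → M}
    (h : ∀ j ∈ s, f j - g j ∈ J a b) :
    (∑ j ∈ s, f j) - (∑ j ∈ s, g j) ∈ J a b := by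
  rw [← Finset.sum_sub_distrib]
  exact Ideal.sum_mem _ h

lemma cf_chat_cong {a b N i : ℕ} (hi : i ≤ N) (hN : a + i < N) :
    cf N i - chat i ∈ J a b := by
  have hPu : P N * u (N - i) = pch (qv * qv^(N-i)) qv i := by
    have hsplit : P N = P (N - i) * pch (qv * qv^(N-i)) qv i := by
      have := pch_add qv (N - i) i
      rw [show N - i + i = N by omega] at this
      exact this
    rw [hsplit, mul_comm (P (N - i)), mul_assoc, P_mul_u, mul_one]
  have hE : pch (qv * qv^(N-i)) qv i - 1 ∈ J a b := by
    apply prod_one_cong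
    intro j _
    have : (1 : M) - qv * qv^(N-i) * qv^j - 1 = -(qv^(N - i + 1 + j)) := by
      rw [pow_add, pow_add, pow_one]
      ring
    rw [this]
    exact neg_mem (qv_pow_mem_J (by omega))
  have key : cf N i - chat i
      = ((-1 : M)^i * qv^(i.choose 2) * u i) * (pch (qv * qv^(N-i)) qv i - 1) := by
    unfold cf chat BB
    rw [if_pos hi, ← hPu]
    ring
  rw [key]
  exact Ideal.mul_mem_left _ _ hE

lemma cauchy_trunc {a b : ℕ} (α β : ℕ → M) :
    (∑ i ∈ Finset.range (b+1), α i * xv^i) * (∑ m ∈ Finset.range (b+1), β m * xv^m)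
    - ∑ n ∈ Finset.range (b+1), (∑ i ∈ Finset.range (n+1), α i * β (n-i)) * xv^n
    ∈ J a b := by
  classical
  rw [Finset.sum_mul_sum, ← Finset.sum_product']
  have hsplit := Finset.sum_filter_add_sum_filter_not
    (Finset.range (b+1) ×ˢ Finset.range (b+1))
    (fun p : ℕ × ℕ => p.1 + p.2 ≤ b)
    (fun p : ℕ × ℕ => α p.1 * xv^p.1 * (β p.2 * xv^p.2))
  have h2 : ∑ p ∈ (Finset.range (b+1) ×ˢ Finset.range (b+1)).filter
      (fun p : ℕ × ℕ => ¬ p.1 + p.2 ≤ b),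
      α p.1 * xv^p.1 * (β p.2 * xv^p.2) ∈ J a b := by
    apply Ideal.sum_mem
    rintro ⟨i, m⟩ hp
    simp only [Finset.mem_filter, Finset.mem_product, Finset.mem_range] at hp
    have : α i * xv^i * (β m * xv^m) = (α i * β m) * xv^(i+m) := by
      rw [pow_add]; ring
    rw [this]
    exact Ideal.mul_mem_left _ _ (xv_pow_mem_J (by omega))
  have h1 : ∑ p ∈ (Finset.range (b+1) ×ˢ Finset.range (b+1)).filter
      (fun p : ℕ × ℕ => p.1 + p.2 ≤ b),
      α p.1 * xv^p.1 * (β p.2 * xv^p.2)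
      = ∑ n ∈ Finset.range (b+1), (∑ i ∈ Finset.range (n+1), α i * β (n-i)) * xv^n := by
    rw [show (∑ n ∈ Finset.range (b+1), (∑ i ∈ Finset.range (n+1), α i * β (n-i)) * xv^n)
        = ∑ n ∈ Finset.range (b+1), ∑ i ∈ Finset.range (n+1), α i * β (n-i) * xv^n from
      Finset.sum_congr rfl (fun n _ => Finset.sum_mul _ _ _)]
    rw [Finset.sum_sigma']
    apply Finset.sum_nbij' (i := fun p => ⟨p.1 + p.2, p.1⟩)
      (j := fun s => (s.2, s.1 - s.2))
    · rintro ⟨i, m⟩ hp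
      simp only [Finset.mem_filter, Finset.mem_product, Finset.mem_range] at hp
      simp only [Finset.mem_sigma, Finset.mem_range]
      omega
    · rintro ⟨n, i⟩ hs
      simp only [Finset.mem_sigma, Finset.mem_range] at hs
      simp only [Finset.mem_filter, Finset.mem_product, Finset.mem_range]
      omega
    · rintro ⟨i, m⟩ hp
      simp
    · rintro ⟨n, i⟩ hs
      simp only [Finset.mem_sigma, Finset.mem_range] at hs
      simp only []
      congr 1 <;> omega
    · rintro ⟨i, m⟩ hp
      simp only [Finset.mem_filter, Finset.mem_product, Finset.mem_range] at hp
      simp only []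
      rw [show i + m - i = m by omega, pow_add]
      ring
  have efin : (∑ x ∈ Finset.range (b+1) ×ˢ Finset.range (b+1),
      α x.1 * xv ^ x.1 * (β x.2 * xv ^ x.2))
      - ∑ n ∈ Finset.range (b+1), (∑ i ∈ Finset.range (n+1), α i * β (n-i)) * xv^n
      = ∑ p ∈ (Finset.range (b+1) ×ˢ Finset.range (b+1)).filter
          (fun p : ℕ × ℕ => ¬ p.1 + p.2 ≤ b),
          α p.1 * xv^p.1 * (β p.2 * xv^p.2) := by
    rw [← hsplit, h1]
    ring
  rw [efin]
  exact h2

def Ub (b : ℕ) : M := ∑ m ∈ Finset.range (b+1), u m * xv^m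
def SS (b : ℕ) (Z : M) : M := ∑ n ∈ Finset.range (b+1), pch Z qv n * u n * xv^n

lemma conv_main {a b N : ℕ} (hN : a + b + 1 ≤ N) (Z : M) :
    (∏ j ∈ Finset.range N, (1 - Z * xv * qv ^ j)) * Ub b - SS b Z ∈ J a b := by
  have hb1N : b + 1 ≤ N + 1 := by omega
  -- Gauss expansion
  have hg : (∏ j ∈ Finset.range N, (1 - Z * xv * qv ^ j))
      = ∑ i ∈ Finset.range (N+1), cf N i * (Z * xv) ^ i := by
    rw [← gauss (Z * xv) N]
  -- A1 → A2 : truncate to range (b+1), with terms rewritten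
  have hA12 : (∑ i ∈ Finset.range (N+1), cf N i * (Z * xv) ^ i)
      - (∑ i ∈ Finset.range (b+1), cf N i * Z ^ i * xv ^ i) ∈ J a b := by
    have e1 : ∀ i, cf N i * (Z * xv) ^ i = cf N i * Z ^ i * xv ^ i := by
      intro i; rw [mul_pow]; ring
    rw [show (∑ i ∈ Finset.range (N+1), cf N i * (Z * xv) ^ i)
        = ∑ i ∈ Finset.range (N+1), cf N i * Z ^ i * xv ^ i from
      Finset.sum_congr rfl (fun i _ => e1 i)]
    rw [Finset.range_eq_Ico, ← Finset.sum_Ico_consecutive _ (Nat.zero_le (b+1)) hb1N,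
      ← Finset.range_eq_Ico]
    have : ∑ i ∈ Finset.Ico (b+1) (N+1), cf N i * Z ^ i * xv ^ i ∈ J a b := by
      apply Ideal.sum_mem
      intro i hi
      rw [Finset.mem_Ico] at hi
      exact Ideal.mul_mem_left _ _ (xv_pow_mem_J (by omega))
    simpa using this
  -- A2 → A3 : replace cf by chat
  have hA23 : (∑ i ∈ Finset.range (b+1), cf N i * Z ^ i * xv ^ i)
      - (∑ i ∈ Finset.range (b+1), chat i * Z ^ i * xv ^ i) ∈ J a b := by
    apply sum_cong
    intro i hi
    rw [Finset.mem_range] at hi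
    have : cf N i * Z ^ i * xv ^ i - chat i * Z ^ i * xv ^ i
        = (cf N i - chat i) * (Z ^ i * xv ^ i) := by ring
    rw [this]
    exact Ideal.mul_mem_right _ _ (cf_chat_cong (by omega) (by omega))
  -- A3 * Ub ≡ SS b Z
  have hA3 : (∑ i ∈ Finset.range (b+1), chat i * Z ^ i * xv ^ i) * Ub b - SS b Z ∈ J a b := by
    have hc := cauchy_trunc (a := a) (b := b) (fun i => chat i * Z ^ i) u
    have e2 : ∀ n, (∑ i ∈ Finset.range (n+1), chat i * Z ^ i * u (n - i)) * xv ^ n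
        = pch Z qv n * u n * xv ^ n := fun n => by rw [convn]
    unfold SS Ub
    rw [← Finset.sum_congr rfl (fun n _ => e2 n)]
    exact hc
  -- combine
  have dec : (∏ j ∈ Finset.range N, (1 - Z * xv * qv ^ j)) * Ub b - SS b Z
      = ((∑ i ∈ Finset.range (N+1), cf N i * (Z * xv) ^ i)
          - (∑ i ∈ Finset.range (b+1), cf N i * Z ^ i * xv ^ i)) * Ub b
        + ((∑ i ∈ Finset.range (b+1), cf N i * Z ^ i * xv ^ i)
          - (∑ i ∈ Finset.range (b+1), chat i * Z ^ i * xv ^ i)) * Ub b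
        + ((∑ i ∈ Finset.range (b+1), chat i * Z ^ i * xv ^ i) * Ub b - SS b Z) := by
    rw [hg]; ring
  rw [dec]
  exact add_mem (add_mem (Ideal.mul_mem_right _ _ hA12) (Ideal.mul_mem_right _ _ hA23)) hA3

lemma CC_prod_x (N : ℕ) (W : M) (hW : CC W = 0) :
    CC (∏ j ∈ Finset.range N, (1 - W * qv ^ j)) = 1 := by
  unfold CC
  rw [map_prod]
  apply Finset.prod_eq_one
  intro j _
  rw [map_sub, map_one, map_mul]
  rw [show (constantCoeff (σ := Fin 2) (R := Kc)) W = 0 from hW]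
  simp

lemma SS_one (b : ℕ) : SS b 1 = 1 := by
  unfold SS
  rw [Finset.sum_eq_single_of_mem 0 (Finset.mem_range.mpr (by omega))]
  · rw [pch_zero, u_zero]; simp
  · intro n _ hn
    have : pch 1 qv n = 0 := by
      unfold pch
      apply Finset.prod_eq_zero (Finset.mem_range.mpr (Nat.pos_of_ne_zero hn))
      simp
    rw [this]
    ring

lemma Qinv_cong {a b N : ℕ} (hN : a + b + 1 ≤ N) :
    (∏ j ∈ Finset.range N, (1 - xv * qv ^ j))⁻¹ - Ub b ∈ J a b := by
  set Q := ∏ j ∈ Finset.range N, (1 - xv * qv ^ j) with hQ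
  have hCC : CC Q ≠ 0 := by rw [hQ, CC_prod_x N xv CC_xv]; exact one_ne_zero
  have h1 : Q * Ub b - 1 ∈ J a b := by
    have := conv_main (a := a) (b := b) hN 1
    rw [SS_one] at this
    have e : ∀ j : ℕ, (1 : M) - 1 * xv * qv ^ j = 1 - xv * qv ^ j := fun j => by rw [one_mul]
    rw [Finset.prod_congr rfl (fun j _ => e j)] at this
    exact this
  have key : Q⁻¹ - Ub b = Q⁻¹ * (1 - Q * Ub b) + (Q⁻¹ * Q - 1) * Ub b := by ring
  rw [key]
  apply add_mem
  · exact Ideal.mul_mem_left _ _ (by simpa [neg_sub] using neg_mem h1)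
  · rw [invmul hCC]
    simp

/-- The q-binomial congruence for the ratio of partial infinite products. -/
lemma QB {a b N : ℕ} (hN : a + b + 1 ≤ N) (Z : M) :
    (∏ j ∈ Finset.range N, (1 - Z * xv * qv ^ j)) *
      (∏ j ∈ Finset.range N, (1 - xv * qv ^ j))⁻¹ - SS b Z ∈ J a b := by
  set Pp := ∏ j ∈ Finset.range N, (1 - Z * xv * qv ^ j) with hPp
  have key : Pp * (∏ j ∈ Finset.range N, (1 - xv * qv ^ j))⁻¹ - SS b Z
      = Pp * ((∏ j ∈ Finset.range N, (1 - xv * qv ^ j))⁻¹ - Ub b)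
        + (Pp * Ub b - SS b Z) := by ring
  rw [key]
  exact add_mem (Ideal.mul_mem_left _ _ (Qinv_cong hN)) (conv_main hN Z)

def ck (k : ℕ) : M := (pch (qv^2) (qv^2) k)⁻¹ * (pch Rv (qv^2) k)⁻¹ * qv^(k*(2*k-2)) * Rv^k
def fL (n : ℕ) : M := pch Rq (qv^2) n * u n * (pch Rq qv n)⁻¹
def g (n : ℕ) : M := ∑ k ∈ Finset.range (n/2+1), ck k * u (n-2*k)
def tG (N k : ℕ) : M := qv^(N-2*k) * (1-qv^(2*k)) * (1-Rq*qv^(2*k-1)) * ck k * u (N-2*k)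

lemma CC_q2_ne (k : ℕ) : CC (pch (qv^2) (qv^2) k) ≠ 0 := by
  rw [CC_pch_q2]; exact one_ne_zero
lemma CC_Rv_ne (k : ℕ) : CC (pch Rv (qv^2) k) ≠ 0 := by
  rw [CC_pch_Rv]; exact one_ne_zero
lemma CC_one_sub_qpow (n : ℕ) (h : 0 < n) : CC (1 - (qv : M)^n) ≠ 0 := by
  rw [show CC (1 - qv^n) = CC 1 - CC (qv^n) by unfold CC; rw [map_sub]]
  rw [CC_qv_pow h]
  unfold CC; simp

lemma ck_rec (k : ℕ) :
    ck (k+1) * (1 - qv^(2*k+2)) * (1 - Rq*qv^(2*k+1)) = ck k * qv^(4*k) * Rv := by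
  unfold ck
  have e1 : pch (qv^2) (qv^2) (k+1) = pch (qv^2) (qv^2) k * (1 - qv^(2*k+2)) := by
    rw [pch_succ]
    congr 2
    rw [← pow_mul, ← pow_add]
    congr 1
    omega
  have e2 : pch Rv (qv^2) (k+1) = pch Rv (qv^2) k * (1 - Rq*qv^(2*k+1)) := by
    rw [pch_succ]
    congr 2
    rw [Rv, ← pow_mul, mul_assoc, ← pow_succ']
  have e3 : (k+1)*(2*(k+1)-2) = k*(2*k-2) + 4*k := by
    rcases k with _ | k'
    · rfl
    · have h1 : 2*(k'+1+1)-2 = 2*k'+2 := by omega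
      have h2 : 2*(k'+1)-2 = 2*k' := by omega
      rw [h1, h2]
      ring
  rw [e1, e2, e3, MvPowerSeries.mul_inv_rev, MvPowerSeries.mul_inv_rev]
  have c1 : (1 - (qv:M)^(2*k+2))⁻¹ * (1 - qv^(2*k+2)) = 1 :=
    invmul (CC_one_sub_qpow _ (by omega))
  have c2 : (1 - Rq*qv^(2*k+1))⁻¹ * (1 - Rq*qv^(2*k+1)) = 1 :=
    invmul (CC_one_sub_Rq_pow _)
  have key : (1 - qv ^ (2 * k + 2))⁻¹ * (pch (qv ^ 2) (qv ^ 2) k)⁻¹ *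
        ((1 - Rq * qv ^ (2 * k + 1))⁻¹ * (pch Rv (qv ^ 2) k)⁻¹) *
        qv ^ (k * (2 * k - 2) + 4 * k) * Rv ^ (k + 1) *
        (1 - qv ^ (2 * k + 2)) * (1 - Rq * qv ^ (2 * k + 1))
      = ((pch (qv ^ 2) (qv ^ 2) k)⁻¹ * (pch Rv (qv ^ 2) k)⁻¹ *
          qv ^ (k * (2 * k - 2) + 4 * k) * Rv ^ (k + 1))
        * ((1 - (qv:M)^(2*k+2))⁻¹ * (1 - qv^(2*k+2)))
        * ((1 - Rq*qv^(2*k+1))⁻¹ * (1 - Rq*qv^(2*k+1))) := by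
    ring
  rw [key, c1, c2, mul_one, mul_one, pow_add, pow_succ]
  ring

lemma sc {m k : ℕ} (hm : 1 ≤ m) :
    (1-qv^(m+2*k))*(1-Rq*qv^(m+2*k-1)) - (1-Rq*qv^(2*(m+2*k)-2))*(1-qv^m)
    = qv^m*(1-qv^(2*k))*(1-Rq*qv^(2*k-1))
      - qv^(m-2)*Rq*qv^(4*k+1)*(1-qv^(m-1))*(1-qv^m) := by
  obtain rfl | ⟨m', rfl⟩ : m = 1 ∨ ∃ m', m = m' + 2 := by
    rcases Nat.lt_or_ge m 2 with h | h
    · exact Or.inl (by omega)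
    · exact Or.inr ⟨m - 2, by omega⟩
  · rcases Nat.eq_zero_or_pos k with hk | hk
    · subst hk; norm_num; ring
    · obtain ⟨k', rfl⟩ : ∃ k', k = k' + 1 := ⟨k-1, by omega⟩
      rw [show 1+2*(k'+1)-1 = 2*k'+2 by omega,
          show 2*(1+2*(k'+1))-2 = 4*k'+4 by omega,
          show 2*(k'+1)-1 = 2*k'+1 by omega]
      ring
  · rcases Nat.eq_zero_or_pos k with hk | hk
    · subst hk
      rw [show m'+2+2*0-1 = m'+1 by omega,
          show 2*(m'+2+2*0)-2 = 2*m'+2 by omega,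
          show 2*0-1 = 0 by omega,
          show m'+2-2 = m' by omega]
      ring
    · obtain ⟨k', rfl⟩ : ∃ k', k = k' + 1 := ⟨k-1, by omega⟩
      rw [show m'+2+2*(k'+1)-1 = m'+2*k'+3 by omega,
          show 2*(m'+2+2*(k'+1))-2 = 2*m'+4*k'+6 by omega,
          show 2*(k'+1)-1 = 2*k'+1 by omega,
          show m'+2-2 = m' by omega,
          show m'+2-1 = m'+1 by omega]
      ring

lemma Rv_eq : Rv = Rq * qv := rfl

lemma stp {N k : ℕ} (h : 2*k+2 ≤ N) :
    (1-qv^N)*(1-Rq*qv^(N-1)) * (ck k * u (N-2*k))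
      - (1-Rq*qv^(2*N-2)) * (ck k * u (N-1-2*k))
    = tG N k - tG N (k+1) := by
  obtain ⟨m, hm2, rfl⟩ : ∃ m, 2 ≤ m ∧ N = m + 2*k := ⟨N-2*k, by omega, by omega⟩
  unfold tG
  rw [show m+2*k-2*k = m by omega, show m+2*k-1-2*k = m-1 by omega,
      show m+2*k-2*(k+1) = m-2 by omega, show 2*(k+1)-1 = 2*k+1 by omega,
      show 2*(k+1) = 2*k+2 by omega]
  rw [show u (m-1) = (1-qv^m) * u m by
        have := u_succ (m-1); rw [show m-1+1 = m by omega] at this; exact this]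
  rw [show u (m-2) = (1-qv^(m-1)) * ((1-qv^m) * u m) by
        have h1 := u_succ (m-2); rw [show m-2+1 = m-1 by omega] at h1
        have h2 := u_succ (m-1); rw [show m-1+1 = m by omega] at h2
        rw [h1, h2]]
  have hck := ck_rec k
  rw [Rv_eq] at hck
  have hsc := sc (m := m) (k := k) (by omega)
  linear_combination (ck k * u m) * hsc
    + (qv^(m-2)*(1-qv^(m-1))*(1-qv^m)*(u m)) * hck

lemma tG_zero (N : ℕ) : tG N 0 = 0 := by
  unfold tG
  norm_num

lemma bdE {K : ℕ} (hK : 1 ≤ K) :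
    (1-qv^(2*K))*(1-Rq*qv^(2*K-1)) * (ck K * u (2*K-2*K)) = tG (2*K) K := by
  unfold tG
  rw [show 2*K-2*K = 0 by omega]
  ring

lemma bdO {K : ℕ} :
    (1-qv^(2*K+1))*(1-Rq*qv^(2*K+1-1)) * (ck K * u (2*K+1-2*K))
      - (1-Rq*qv^(2*(2*K+1)-2)) * (ck K * u (2*K+1-1-2*K)) = tG (2*K+1) K := by
  unfold tG
  rw [show 2*K+1-2*K = 1 by omega, show 2*K+1-1-2*K = 0 by omega,
      show 2*K+1-1 = 2*K by omega, show 2*(2*K+1)-2 = 4*K by omega]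
  rw [show u 0 = (1-qv^1) * u 1 from u_succ 0]
  have hsc := sc (m := 1) (k := K) (le_refl 1)
  rw [show (1:ℕ)+2*K-1 = 2*K by omega, show 2*(1+2*K)-2 = 4*K by omega] at hsc
  linear_combination (ck K * u 1) * hsc

lemma R_g {N : ℕ} (h1 : 1 ≤ N) :
    (1-qv^N)*(1-Rq*qv^(N-1)) * g N = (1-Rq*qv^(2*N-2)) * g (N-1) := by
  set α := (1-qv^N)*(1-Rq*qv^(N-1)) with hα
  set β := (1-Rq*qv^(2*N-2)) with hβ
  rw [← sub_eq_zero]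
  rcases Nat.even_or_odd N with ⟨K, hK⟩ | ⟨K, hK⟩
  · -- N = 2K
    have hK2 : N = 2*K := by omega
    have hK1 : 1 ≤ K := by omega
    have hgN : g N = ∑ k ∈ Finset.range (K+1), ck k * u (N - 2*k) := by
      unfold g; rw [show N/2 = K by omega]
    have hgN1 : g (N-1) = ∑ k ∈ Finset.range K, ck k * u (N-1-2*k) := by
      unfold g; rw [show (N-1)/2 + 1 = K by omega]
    have expand : α * g N - β * g (N-1)
        = (∑ k ∈ Finset.range K,
            (α * (ck k * u (N-2*k)) - β * (ck k * u (N-1-2*k))))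
          + α * (ck K * u (N-2*K)) := by
      rw [hgN, hgN1, Finset.sum_range_succ, mul_add, Finset.mul_sum, Finset.mul_sum,
        Finset.sum_sub_distrib]
      ring
    rw [expand]
    rw [Finset.sum_congr rfl (fun k hk => stp (N := N) (k := k)
        (by rw [Finset.mem_range] at hk; omega))]
    rw [Finset.sum_range_sub' (tG N) K, tG_zero]
    have hb : α * (ck K * u (N-2*K)) = tG N K := by
      rw [hα, hK2, show 2*K-1 = 2*K-1 from rfl]
      exact bdE hK1
    rw [hb]
    ring
  · -- N = 2K+1
    have hK2 : N = 2*K+1 := by omega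
    have hgN : g N = ∑ k ∈ Finset.range (K+1), ck k * u (N - 2*k) := by
      unfold g; rw [show N/2 = K by omega]
    have hgN1 : g (N-1) = ∑ k ∈ Finset.range (K+1), ck k * u (N-1-2*k) := by
      unfold g; rw [show (N-1)/2 + 1 = K+1 by omega]
    have expand : α * g N - β * g (N-1)
        = (∑ k ∈ Finset.range K,
            (α * (ck k * u (N-2*k)) - β * (ck k * u (N-1-2*k))))
          + (α * (ck K * u (N-2*K)) - β * (ck K * u (N-1-2*K))) := by
      rw [hgN, hgN1, Finset.sum_range_succ, Finset.sum_range_succ, mul_add, mul_add,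
        Finset.mul_sum, Finset.mul_sum, Finset.sum_sub_distrib]
      ring
    rw [expand]
    rw [Finset.sum_congr rfl (fun k hk => stp (N := N) (k := k)
        (by rw [Finset.mem_range] at hk; omega))]
    rw [Finset.sum_range_sub' (tG N) K, tG_zero]
    have hb : α * (ck K * u (N-2*K)) - β * (ck K * u (N-1-2*K)) = tG N K := by
      rw [hα, hβ, hK2]
      exact bdO
    rw [hb]
    ring

lemma R_f (n : ℕ) :
    (1-qv^(n+1))*(1-Rq*qv^n) * fL (n+1) = (1-Rq*qv^(2*n)) * fL n := by
  unfold fL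
  have e1 : pch Rq (qv^2) (n+1) = pch Rq (qv^2) n * (1 - Rq*qv^(2*n)) := by
    rw [pch_succ, ← pow_mul]
  have e2 : (pch Rq qv (n+1))⁻¹ = (pch Rq qv n)⁻¹ * (1 - Rq*qv^n)⁻¹ := by
    rw [pch_succ, MvPowerSeries.mul_inv_rev]
    ring
  have hc : (1 - Rq*qv^n)⁻¹ * (1 - Rq*qv^n) = 1 := invmul (CC_one_sub_Rq_pow n)
  rw [e1, e2, u_succ n]
  linear_combination ((1-Rq*qv^(2*n)) * pch Rq (qv^2) n * u (n+1) * (1-qv^(n+1)) *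
    (pch Rq qv n)⁻¹) * hc

lemma inv_one_M : (1 : M)⁻¹ = 1 := by
  have := mulinv (f := (1:M)) (by rw [show CC 1 = 1 from map_one _]; exact one_ne_zero)
  simpa using this

lemma g_zero : g 0 = 1 := by
  unfold g
  rw [show (0/2+1) = 1 by omega, Finset.sum_range_one]
  unfold ck
  rw [pch_zero, pch_zero, inv_one_M, u_zero]
  simp

lemma fL_zero : fL 0 = 1 := by
  unfold fL
  rw [pch_zero, pch_zero, inv_one_M, u_zero]
  simp

lemma g_eq_fL (n : ℕ) : g n = fL n := by
  induction n with
  | zero => rw [g_zero, fL_zero]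
  | succ n ih =>
    have hg := R_g (N := n+1) (by omega)
    rw [show n+1-1 = n by omega, show 2*(n+1)-2 = 2*n by omega] at hg
    have hf := R_f n
    have hcan : (1-qv^(n+1))*(1-Rq*qv^n) ≠ 0 := by
      apply ne_zero_of_CC
      rw [show CC ((1-qv^(n+1))*(1-Rq*qv^n)) = CC (1-qv^(n+1)) * CC (1-Rq*qv^n)
        from map_mul _ _ _]
      exact mul_ne_zero (CC_one_sub_qpow _ (by omega)) (CC_one_sub_Rq_pow _)
    apply mul_left_cancel₀ hcan
    rw [hg, ih, ← hf]

/-- Per-degree collection: recombination of the Pochhammer products. -/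
lemma per_n (n : ℕ) :
    ∑ k ∈ Finset.range (n/2+1),
      (pch (Dv^2) qv (2*k) * (pch (qv^2) (qv^2) k)⁻¹ * (pch Rv (qv^2) k)⁻¹
        * (pch (Dv^2*qv^(2*k)) qv (n-2*k) * u (n-2*k)) * qv^(k*(2*k-2)) * Rv^k)
    = pch (Dv^2) qv n * pch Rq (qv^2) n * (pch qv qv n)⁻¹ * (pch Rq qv n)⁻¹ := by
  have step : ∀ k ∈ Finset.range (n/2+1),
      pch (Dv^2) qv (2*k) * (pch (qv^2) (qv^2) k)⁻¹ * (pch Rv (qv^2) k)⁻¹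
        * (pch (Dv^2*qv^(2*k)) qv (n-2*k) * u (n-2*k)) * qv^(k*(2*k-2)) * Rv^k
      = pch (Dv^2) qv n * (ck k * u (n-2*k)) := by
    intro k hk
    rw [Finset.mem_range] at hk
    have hsplit : pch (Dv^2) qv n = pch (Dv^2) qv (2*k) * pch (Dv^2*qv^(2*k)) qv (n-2*k) := by
      have := pch_add (Dv^2) (2*k) (n-2*k)
      rw [show 2*k + (n-2*k) = n by omega] at this
      exact this
    rw [hsplit]
    unfold ck
    ring
  rw [Finset.sum_congr rfl step, ← Finset.mul_sum]
  rw [show (∑ k ∈ Finset.range (n/2+1), ck k * u (n-2*k)) = g n from rfl]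
  rw [g_eq_fL]
  unfold fL
  rw [show u n = (pch qv qv n)⁻¹ from rfl]
  ring

lemma cauchy_trunc2 {a b : ℕ} (F : ℕ → ℕ → M) :
    (∑ k ∈ Finset.range (b+1), ∑ m ∈ Finset.range (b+1), F k m * xv^(2*k+m))
    - ∑ n ∈ Finset.range (b+1), (∑ k ∈ Finset.range (n/2+1), F k (n-2*k)) * xv^n
    ∈ J a b := by
  classical
  rw [← Finset.sum_product']
  have hsplit := Finset.sum_filter_add_sum_filter_not
    (Finset.range (b+1) ×ˢ Finset.range (b+1))
    (fun p : ℕ × ℕ => 2 * p.1 + p.2 ≤ b)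
    (fun p : ℕ × ℕ => F p.1 p.2 * xv^(2*p.1+p.2))
  have h2 : ∑ p ∈ (Finset.range (b+1) ×ˢ Finset.range (b+1)).filter
      (fun p : ℕ × ℕ => ¬ 2 * p.1 + p.2 ≤ b),
      F p.1 p.2 * xv^(2*p.1+p.2) ∈ J a b := by
    apply Ideal.sum_mem
    rintro ⟨k, m⟩ hp
    simp only [Finset.mem_filter, Finset.mem_product, Finset.mem_range] at hp
    exact Ideal.mul_mem_left _ _ (xv_pow_mem_J (by omega))
  have h1 : ∑ p ∈ (Finset.range (b+1) ×ˢ Finset.range (b+1)).filter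
      (fun p : ℕ × ℕ => 2 * p.1 + p.2 ≤ b),
      F p.1 p.2 * xv^(2*p.1+p.2)
      = ∑ n ∈ Finset.range (b+1), (∑ k ∈ Finset.range (n/2+1), F k (n-2*k)) * xv^n := by
    rw [show (∑ n ∈ Finset.range (b+1), (∑ k ∈ Finset.range (n/2+1), F k (n-2*k)) * xv^n)
        = ∑ n ∈ Finset.range (b+1), ∑ k ∈ Finset.range (n/2+1), F k (n-2*k) * xv^n from
      Finset.sum_congr rfl (fun n _ => Finset.sum_mul _ _ _)]
    rw [Finset.sum_sigma']
    apply Finset.sum_nbij' (i := fun p => ⟨2*p.1 + p.2, p.1⟩)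
      (j := fun s => (s.2, s.1 - 2*s.2))
    · rintro ⟨k, m⟩ hp
      simp only [Finset.mem_filter, Finset.mem_product, Finset.mem_range] at hp
      simp only [Finset.mem_sigma, Finset.mem_range]
      omega
    · rintro ⟨n, k⟩ hs
      simp only [Finset.mem_sigma, Finset.mem_range] at hs
      simp only [Finset.mem_filter, Finset.mem_product, Finset.mem_range]
      omega
    · rintro ⟨k, m⟩ hp
      simp
    · rintro ⟨n, k⟩ hs
      simp only [Finset.mem_sigma, Finset.mem_range] at hs
      simp only []
      congr 1 <;> omega
    · rintro ⟨k, m⟩ hp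
      simp only [Finset.mem_filter, Finset.mem_product, Finset.mem_range] at hp
      simp only []
      rw [show 2*k + m - 2*k = m by omega]
  have efin : (∑ x ∈ Finset.range (b+1) ×ˢ Finset.range (b+1),
      F x.1 x.2 * xv ^ (2*x.1+x.2))
      - ∑ n ∈ Finset.range (b+1), (∑ k ∈ Finset.range (n/2+1), F k (n-2*k)) * xv^n
      = ∑ p ∈ (Finset.range (b+1) ×ˢ Finset.range (b+1)).filter
          (fun p : ℕ × ℕ => ¬ 2 * p.1 + p.2 ≤ b),
          F p.1 p.2 * xv^(2*p.1+p.2) := by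
    rw [← hsplit, h1]
    ring
  rw [efin]
  exact h2


/-- Quadratic transformation (Proposition A.6): as formal power series in `x`,
`∑_{n=0}^∞ (D²;q)_n (R/q;q²)_n / ((q;q)_n (R/q;q)_n) xⁿ
 = ∑_{k=0}^∞ (D²;q)_{2k}/((q²;q²)_k (R;q²)_k) · (D²xq^{2k};q)_∞/(x;q)_∞ · q^{k(2k-2)} R^k x^{2k}`,
where the infinite sums and products are interpreted via stabilization of coefficients of
their truncations (`q` being a formal series variable). -/
theorem quadratic_transformation :
    ∀ d : Fin 2 →₀ ℕ, ∃ N₀ : ℕ, ∀ N ≥ N₀,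
      MvPowerSeries.coeff (R := Kc) d
        (∑ n ∈ Finset.range N,
          pch (Dv ^ 2) qv n * pch Rq (qv ^ 2) n * (pch qv qv n)⁻¹ * (pch Rq qv n)⁻¹ * xv ^ n) =
      MvPowerSeries.coeff (R := Kc) d
        (∑ k ∈ Finset.range N,
          pch (Dv ^ 2) qv (2 * k) * (pch (qv ^ 2) (qv ^ 2) k)⁻¹ * (pch Rv (qv ^ 2) k)⁻¹ *
            ((∏ j ∈ Finset.range N, (1 - Dv ^ 2 * xv * qv ^ (2 * k) * qv ^ j)) *
              (∏ j ∈ Finset.range N, (1 - xv * qv ^ j))⁻¹) *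
            qv ^ (k * (2 * k - 2)) * Rv ^ k * xv ^ (2 * k)) := by
  intro d
  refine ⟨d 0 + d 1 + 2, fun N hN => ?_⟩
  set a := d 0 with ha
  set b := d 1 with hb
  set Lf : ℕ → M := fun n =>
    pch (Dv ^ 2) qv n * pch Rq (qv ^ 2) n * (pch qv qv n)⁻¹ * (pch Rq qv n)⁻¹ with hLf
  set Rf : ℕ → M := fun k =>
    pch (Dv ^ 2) qv (2 * k) * (pch (qv ^ 2) (qv ^ 2) k)⁻¹ * (pch Rv (qv ^ 2) k)⁻¹ *
      ((∏ j ∈ Finset.range N, (1 - Dv ^ 2 * xv * qv ^ (2 * k) * qv ^ j)) *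
        (∏ j ∈ Finset.range N, (1 - xv * qv ^ j))⁻¹) *
      qv ^ (k * (2 * k - 2)) * Rv ^ k * xv ^ (2 * k) with hRf
  set Gf : ℕ → M := fun k =>
    pch (Dv ^ 2) qv (2 * k) * (pch (qv ^ 2) (qv ^ 2) k)⁻¹ * (pch Rv (qv ^ 2) k)⁻¹ *
      SS b (Dv^2 * qv^(2*k)) * qv ^ (k * (2 * k - 2)) * Rv ^ k * xv ^ (2 * k) with hGf
  set F : ℕ → ℕ → M := fun k m =>
    pch (Dv^2) qv (2*k) * (pch (qv^2) (qv^2) k)⁻¹ * (pch Rv (qv^2) k)⁻¹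
      * (pch (Dv^2*qv^(2*k)) qv m * u m) * qv^(k*(2*k-2)) * Rv^k with hF
  suffices h : (∑ n ∈ Finset.range N, Lf n * xv ^ n) - (∑ k ∈ Finset.range N, Rf k)
      ∈ J a b by
    have h0 := h d (le_refl _) (le_refl _)
    rw [map_sub] at h0
    exact sub_eq_zero.mp h0
  -- truncation of the left sum
  have m6 : (∑ n ∈ Finset.range N, Lf n * xv ^ n)
      - (∑ n ∈ Finset.range (b+1), Lf n * xv ^ n) ∈ J a b := by
    rw [Finset.range_eq_Ico,
      ← Finset.sum_Ico_consecutive _ (Nat.zero_le (b+1)) (show b+1 ≤ N by omega),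
      ← Finset.range_eq_Ico]
    have hbad : ∑ n ∈ Finset.Ico (b+1) N, Lf n * xv^n ∈ J a b :=
      Ideal.sum_mem _ (fun n hn => Ideal.mul_mem_left _ _
        (xv_pow_mem_J (by rw [Finset.mem_Ico] at hn; omega)))
    simpa using hbad
  -- truncation of the right sum
  have m1 : (∑ k ∈ Finset.range N, Rf k) - (∑ k ∈ Finset.range (b+1), Rf k) ∈ J a b := by
    rw [Finset.range_eq_Ico,
      ← Finset.sum_Ico_consecutive _ (Nat.zero_le (b+1)) (show b+1 ≤ N by omega),
      ← Finset.range_eq_Ico]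
    have hbad : ∑ k ∈ Finset.Ico (b+1) N, Rf k ∈ J a b := by
      apply Ideal.sum_mem _ (fun k hk => ?_)
      rw [Finset.mem_Ico] at hk
      exact Ideal.mul_mem_left _ _ (xv_pow_mem_J (by omega))
    simpa using hbad
  -- replace the product ratio by SS
  have m2 : (∑ k ∈ Finset.range (b+1), Rf k) - (∑ k ∈ Finset.range (b+1), Gf k) ∈ J a b := by
    apply sum_cong
    intro k _
    have hprod : (∏ j ∈ Finset.range N, (1 - Dv ^ 2 * xv * qv ^ (2 * k) * qv ^ j))
        = ∏ j ∈ Finset.range N, (1 - (Dv^2 * qv^(2*k)) * xv * qv ^ j) :=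
      Finset.prod_congr rfl (fun j _ => by ring)
    have hqb := QB (a := a) (b := b) (N := N) (by omega) (Dv^2 * qv^(2*k))
    have key : Rf k - Gf k
        = ((∏ j ∈ Finset.range N, (1 - (Dv^2 * qv^(2*k)) * xv * qv ^ j)) *
            (∏ j ∈ Finset.range N, (1 - xv * qv ^ j))⁻¹ - SS b (Dv^2 * qv^(2*k)))
          * (pch (Dv ^ 2) qv (2 * k) * (pch (qv ^ 2) (qv ^ 2) k)⁻¹ *
              (pch Rv (qv ^ 2) k)⁻¹ * qv ^ (k * (2 * k - 2)) * Rv ^ k * xv ^ (2 * k)) := by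
      rw [hRf, hGf]
      simp only []
      rw [hprod]
      ring
    rw [key]
    exact Ideal.mul_mem_right _ _ hqb
  -- expand SS into a double sum
  have e3 : (∑ k ∈ Finset.range (b+1), Gf k)
      = ∑ k ∈ Finset.range (b+1), ∑ m ∈ Finset.range (b+1), F k m * xv^(2*k+m) := by
    apply Finset.sum_congr rfl
    intro k _
    rw [hGf, hF]
    simp only []
    unfold SS
    rw [Finset.mul_sum, Finset.sum_mul, Finset.sum_mul, Finset.sum_mul]
    apply Finset.sum_congr rfl
    intro m _
    rw [pow_add]
    ring
  -- reindex
  have m4 := cauchy_trunc2 (a := a) (b := b) F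
  -- per-degree identity
  have e5 : (∑ n ∈ Finset.range (b+1), (∑ k ∈ Finset.range (n/2+1), F k (n-2*k)) * xv^n)
      = ∑ n ∈ Finset.range (b+1), Lf n * xv ^ n := by
    apply Finset.sum_congr rfl
    intro n _
    rw [hF, hLf]
    simp only []
    rw [per_n n]
  have mm : (∑ k ∈ Finset.range (b+1), Gf k)
      - (∑ n ∈ Finset.range (b+1), Lf n * xv ^ n) ∈ J a b := by
    rw [e3, ← e5]
    exact m4
  have total : (∑ n ∈ Finset.range N, Lf n * xv ^ n) - (∑ k ∈ Finset.range N, Rf k)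
      = ((∑ n ∈ Finset.range N, Lf n * xv ^ n) - (∑ n ∈ Finset.range (b+1), Lf n * xv ^ n))
        - (((∑ k ∈ Finset.range N, Rf k) - (∑ k ∈ Finset.range (b+1), Rf k))
          + ((∑ k ∈ Finset.range (b+1), Rf k) - (∑ k ∈ Finset.range (b+1), Gf k))
          + ((∑ k ∈ Finset.range (b+1), Gf k)
              - (∑ n ∈ Finset.range (b+1), Lf n * xv ^ n))) := by
    ring
  rw [total]
  exact sub_mem m6 (add_mem (add_mem m1 m2) mm)

end
end
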